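/- Let S and A be symmetric positive semidefinite N×N real matrices. Then every real eigenvalue of the product S * A is nonnegative: if μ ∈ ℝ and v ∈ ℝᴺ with v ≠ 0 satisfy (S * A) *ᵥ v = μ • v, then μ ≥ 0. (Thus, although the symmetric part S*A + (S*A)ᵀ of the product of two positive semidefinite matrices may have negative eigenvalues, the product S*A itself has none.) -/

import Mathlib

open Matrix

/-- Every real eigenvalue of the product of two symmetric positive semidefinite
matrices is nonnegative. -/
theorem eigenvalue_of_psd_product_nonneg
    (N : ℕ)
    (S A : Matrix (Fin N) (Fin N) ℝ)
    (hSsymm : Sᵀ = S) (hSpsd : ∀ v : Fin N → ℝ, 0 ≤ v ⬝ᵥ (S *ᵥ v))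
    (hAsymm : Aᵀ = A) (hApsd : ∀ v : Fin N → ℝ, 0 ≤ v ⬝ᵥ (A *ᵥ v))
    (μ : ℝ) (v : Fin N → ℝ) (hv : v ≠ 0)
    (heig : (S * A) *ᵥ v = μ • v) :
    0 ≤ μ := by
  have hApsd' : A.PosSemidef := by
    refine posSemidef_iff_dotProduct_mulVec.mpr ⟨?_, ?_⟩
    · show Aᴴ = A
      rwa [conjTranspose_eq_transpose_of_trivial]
    · intro x
      simpa using hApsd x
  have h1 : S *ᵥ (A *ᵥ v) = μ • v := by
    rw [mulVec_mulVec, heig]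
  have key : (A *ᵥ v) ⬝ᵥ S *ᵥ (A *ᵥ v) = μ * (v ⬝ᵥ A *ᵥ v) := by
    rw [h1, dotProduct_smul, smul_eq_mul, dotProduct_comm]
  have h2 : 0 ≤ μ * (v ⬝ᵥ A *ᵥ v) := key ▸ hSpsd _
  rcases eq_or_lt_of_le (hApsd v) with h | h
  · have hAv : A *ᵥ v = 0 := by
      rw [← hApsd'.dotProduct_mulVec_zero_iff]
      simpa using h.symm
    have : μ • v = 0 := by rw [← h1, hAv, mulVec_zero]
    rcases smul_eq_zero.mp this with h0 | h0
    · exact h0.ge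
    · exact absurd h0 hv
  · nlinarith
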